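/- arXiv:0812.0271 — 7 statements merged into one kernel-verified Lean document; each statement's English description precedes it below -/
import Mathlib

section
/- Let t ≥ 1 be a natural number, let E be a set of prime numbers containing all but finitely many primes, and let f : E → ℕ be any function. Then every natural number d which divides (p^t − 1)·p^{f(p)} for every prime p ∈ E divides N_t. (Equivalently, the gcd of the family {(p^t − 1)·p^{f(p)}}_{p ∈ E} divides N_t.) -/
/-- For `t ∈ ℕ`: `N 0 = 0`; `N t = 2` for odd `t`;
`N t = 2 * ∏_{p prime, (p-1) ∣ t} p^(v_p(t)+1)` for even positive `t`.
(Any prime `p` with `(p-1) ∣ t` satisfies `p ≤ t + 1 < t + 2`.) -/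
def Npaper (t : ℕ) : ℕ :=
  if t = 0 then 0
  else if t % 2 = 1 then 2
  else 2 * ∏ p ∈ Finset.filter (fun p => p.Prime ∧ (p - 1) ∣ t) (Finset.range (t + 2)),
      p ^ (t.factorization p + 1)

/-- In a cofinite set of primes, every unit residue class contains a prime. -/
lemma aux_exists_prime_cast_eq (E : Set ℕ)
    (hcofin : {p : ℕ | Nat.Prime p ∧ p ∉ E}.Finite)
    {n : ℕ} [NeZero n] {a : ZMod n} (ha : IsUnit a) :
    ∃ p ∈ E, p.Prime ∧ (p : ZMod n) = a := by
  have h1 := Nat.infinite_setOfPred_prime_and_eq_mod ha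
  obtain ⟨p, hp⟩ := (h1.diff hcofin).nonempty
  rw [Set.mem_diff, Set.mem_setOf_eq, Set.mem_setOf_eq] at hp
  refine ⟨p, ?_, hp.1.1, hp.1.2⟩
  by_contra hpe
  exact hp.2 ⟨hp.1.1, hpe⟩

/-- Workhorse: for every `n ∣ d` and unit `a : ZMod n`, there is a prime `p ≡ a`
with `n ∣ p^t - 1`. -/
lemma aux_work (t : ℕ) (E : Set ℕ)
    (hcofin : {p : ℕ | Nat.Prime p ∧ p ∉ E}.Finite)
    (f : ℕ → ℕ) (d : ℕ) (hd : ∀ p ∈ E, d ∣ (p ^ t - 1) * p ^ (f p))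
    (n : ℕ) [NeZero n] (hnd : n ∣ d) {a : ZMod n} (ha : IsUnit a) :
    ∃ p : ℕ, p.Prime ∧ p.Coprime n ∧ ((p : ZMod n)) = a ∧ n ∣ p ^ t - 1 := by
  obtain ⟨p, hpE, hp, hpa⟩ := aux_exists_prime_cast_eq E hcofin ha
  have hcop : p.Coprime n := (ZMod.isUnit_iff_coprime p n).mp (hpa ▸ ha)
  have h1 : n ∣ (p ^ t - 1) * p ^ (f p) := hnd.trans (hd p hpE)
  have h2 : Nat.Coprime n (p ^ (f p)) := (hcop.symm).pow_right _
  exact ⟨p, hp, hcop, hpa, h2.dvd_of_dvd_mul_right h1⟩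

lemma aux_cast_pow_eq_one {n p t : ℕ} (hp : 2 ≤ p) (h : n ∣ p ^ t - 1) :
    ((p : ZMod n)) ^ t = 1 := by
  have h1 : (1 : ℕ) ≤ p ^ t := Nat.one_le_pow _ _ (by omega)
  have h2 : ((p ^ t - 1 : ℕ) : ZMod n) = 0 := (ZMod.natCast_eq_zero_iff _ _).mpr h
  rw [Nat.cast_sub h1] at h2
  push_cast at h2
  linear_combination h2

lemma aux_pv_eq {q n k : ℕ} (hq : q.Prime) (hn : n ≠ 0)
    (h1 : q ^ k ∣ n) (h2 : ¬ q ^ (k + 1) ∣ n) : padicValNat q n = k := by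
  haveI := Fact.mk hq
  have a := (padicValNat_dvd_iff_le hn).mp h1
  have b : ¬ (k + 1 ≤ padicValNat q n) := fun h => h2 ((padicValNat_dvd_iff_le hn).mpr h)
  omega

/-- (A): if `q` is prime and `q ∣ d`, then `q - 1 ∣ t`. -/
lemma aux_A (t : ℕ) (ht : 1 ≤ t) (E : Set ℕ)
    (hcofin : {p : ℕ | Nat.Prime p ∧ p ∉ E}.Finite)
    (f : ℕ → ℕ) (d : ℕ) (hd : ∀ p ∈ E, d ∣ (p ^ t - 1) * p ^ (f p))
    {q : ℕ} (hq : q.Prime) (hqd : q ∣ d) : (q - 1) ∣ t := by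
  haveI := Fact.mk hq
  obtain ⟨g, hg⟩ := IsCyclic.exists_generator (α := (ZMod q)ˣ)
  obtain ⟨p, hp, -, hpa, hdvd⟩ := aux_work t E hcofin f d hd q hqd g.isUnit
  have h1 : ((p : ZMod q)) ^ t = 1 := aux_cast_pow_eq_one hp.two_le hdvd
  rw [hpa] at h1
  have h2 : g ^ t = 1 := Units.ext (by simpa using h1)
  have h3 : orderOf g ∣ t := orderOf_dvd_of_pow_eq_one h2
  rwa [orderOf_eq_card_of_forall_mem_zpowers hg, Nat.card_eq_fintype_card, ZMod.card_units_eq_totient,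
    Nat.totient_prime hq] at h3

/-- (B): for odd prime `q`, if `q^k ∣ d` with `k ≥ 2`, then `k ≤ v_q(t) + 1`. -/
lemma aux_B (t : ℕ) (ht : 1 ≤ t) (E : Set ℕ)
    (hcofin : {p : ℕ | Nat.Prime p ∧ p ∉ E}.Finite)
    (f : ℕ → ℕ) (d : ℕ) (hd : ∀ p ∈ E, d ∣ (p ^ t - 1) * p ^ (f p))
    {q k : ℕ} (hq : q.Prime) (hodd : Odd q) (hk : 2 ≤ k) (hqd : q ^ k ∣ d) :
    k ≤ padicValNat q t + 1 := by
  haveI := Fact.mk hq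
  haveI : NeZero (q ^ k) := ⟨pow_ne_zero _ hq.pos.ne'⟩
  have hc : Nat.Coprime (1 + q) (q ^ k) := by
    have : Nat.Coprime (1 + q) q := by
      simpa [Nat.add_comm 1 q] using Nat.coprime_succ_self_left (n := q)
    exact this.pow_right _
  have ha : IsUnit (((1 + q : ℕ)) : ZMod (q ^ k)) := (ZMod.isUnit_iff_coprime _ _).mpr hc
  obtain ⟨p, hp, hcop, hpa, hdvd⟩ := aux_work t E hcofin f d hd (q ^ k) hqd ha
  have hp1 : 1 ≤ p := hp.one_lt.le
  have hmod : p ≡ 1 + q [MOD q ^ k] := (ZMod.natCast_eq_natCast_iff _ _ _).mp hpa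
  have hmod2 : p ≡ 1 + q [MOD q ^ 2] := hmod.of_dvd (pow_dvd_pow q hk)
  have hmodq : p ≡ 1 [MOD q] := by
    have h1 : p ≡ 1 + q [MOD q] := hmod.of_dvd (dvd_pow_self q (by omega))
    have h2 : (1 + q) ≡ 1 [MOD q] := by
      show (1 + q) % q = 1 % q
      rw [Nat.add_comm]
      exact Nat.add_mod_left q 1
    exact h1.trans h2
  have hdvd1 : q ∣ p - 1 := (Nat.modEq_iff_dvd' hp1).mp hmodq.symm
  have hndvd1 : ¬ q ^ 2 ∣ p - 1 := by
    intro hcon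
    have h1 : p ≡ 1 [MOD q ^ 2] := ((Nat.modEq_iff_dvd' hp1).mpr hcon).symm
    have h2 : (1 : ℕ) ≡ 1 + q [MOD q ^ 2] := h1.symm.trans hmod2
    have h3 : q ^ 2 ∣ q := by
      have := (Nat.modEq_iff_dvd' (by omega)).mp h2
      simpa using this
    have h4 : q ^ 2 ≤ q := Nat.le_of_dvd hq.pos h3
    have h5 := hq.two_le
    nlinarith [sq_nonneg q]
  have hqnp : ¬ q ∣ p := by
    have h : Nat.Coprime p q := hcop.coprime_dvd_right (dvd_pow_self q (by omega))
    exact (hq.coprime_iff_not_dvd).mp h.symm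
  have hpt : p ^ t - 1 ≠ 0 := by
    have : 2 ≤ p ^ t := le_trans hp.two_le (Nat.le_self_pow (by omega) p)
    omega
  have hv1 : padicValNat q (p - 1) = 1 := aux_pv_eq hq (by have := hp.one_lt; omega) (by simpa using hdvd1) (by simpa using hndvd1)
  have hlte : padicValNat q (p ^ t - 1 ^ t) = padicValNat q (p - 1) + padicValNat q t :=
    padicValNat.pow_sub_pow hodd hp.one_lt hdvd1 hqnp (by omega)
  rw [one_pow] at hlte
  have hk2 : k ≤ padicValNat q (p ^ t - 1) := (padicValNat_dvd_iff_le hpt).mp hdvd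
  omega

/-- (C): if `2^k ∣ d` with `k ≥ 3` and `t` even, then `k ≤ v_2(t) + 2`. -/
lemma aux_C (t : ℕ) (ht : 1 ≤ t) (E : Set ℕ)
    (hcofin : {p : ℕ | Nat.Prime p ∧ p ∉ E}.Finite)
    (f : ℕ → ℕ) (d : ℕ) (hd : ∀ p ∈ E, d ∣ (p ^ t - 1) * p ^ (f p))
    {k : ℕ} (hk : 3 ≤ k) (heven : Even t) (hqd : 2 ^ k ∣ d) :
    k ≤ padicValNat 2 t + 2 := by
  haveI : NeZero (2 ^ k) := ⟨pow_ne_zero _ two_ne_zero⟩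
  have hc : Nat.Coprime 3 (2 ^ k) := (by decide : Nat.Coprime 3 2).pow_right _
  have ha : IsUnit (((3 : ℕ)) : ZMod (2 ^ k)) := (ZMod.isUnit_iff_coprime _ _).mpr hc
  obtain ⟨p, hp, hcop, hpa, hdvd⟩ := aux_work t E hcofin f d hd (2 ^ k) hqd ha
  have hmod : p ≡ 3 [MOD 2 ^ k] := (ZMod.natCast_eq_natCast_iff _ _ _).mp hpa
  have hmod8 : p ≡ 3 [MOD 8] := by
    have : (8 : ℕ) ∣ 2 ^ k := by
      have := pow_dvd_pow 2 hk
      norm_num at this ⊢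
      exact this
    exact hmod.of_dvd this
  have h8 : p % 8 = 3 := by
    have := hmod8
    unfold Nat.ModEq at this
    omega
  have hd1 : 2 ∣ p - 1 := by omega
  have hnd1 : ¬ (4 : ℕ) ∣ p - 1 := by omega
  have hd2 : 4 ∣ p + 1 := by omega
  have hnd2 : ¬ (8 : ℕ) ∣ p + 1 := by omega
  have hp2 : ¬ (2 : ℕ) ∣ p := by omega
  have hv1 : padicValNat 2 (p - 1) = 1 :=
    aux_pv_eq Nat.prime_two (by omega) (by simpa using hd1) (by norm_num; exact hnd1)
  have hv2 : padicValNat 2 (p + 1) = 2 :=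
    aux_pv_eq Nat.prime_two (by omega) (by norm_num; exact hd2) (by norm_num; exact hnd2)
  have hpt : p ^ t - 1 ≠ 0 := by
    have : 2 ≤ p ^ t := le_trans hp.two_le (Nat.le_self_pow (by omega) p)
    omega
  have hlte : padicValNat 2 (p ^ t - 1 ^ t) + 1 =
      padicValNat 2 (p + 1) + padicValNat 2 (p - 1) + padicValNat 2 t :=
    padicValNat.pow_two_sub_pow hp.one_lt hd1 hp2 (by omega) heven
  rw [one_pow] at hlte
  haveI := Fact.mk Nat.prime_two
  have hk2 : k ≤ padicValNat 2 (p ^ t - 1) := (padicValNat_dvd_iff_le hpt).mp hdvd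
  omega

/-- Lemma 3.2 of the paper (a variant of a result of Adams): if `E` is a set of primes
containing all but finitely many primes, `f : E → ℕ` any function, `t ≥ 1`, and `d`
divides `(p^t - 1) * p^(f p)` for every `p ∈ E`, then `d ∣ N t`. -/
theorem stmt_0 (t : ℕ) (ht : 1 ≤ t) (E : Set ℕ)
    (hEprime : ∀ p ∈ E, Nat.Prime p)
    (hcofin : {p : ℕ | Nat.Prime p ∧ p ∉ E}.Finite)
    (f : ℕ → ℕ) (d : ℕ)
    (hd : ∀ p ∈ E, d ∣ (p ^ t - 1) * p ^ (f p)) :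
    d ∣ Npaper t := by
  rw [Nat.dvd_iff_prime_pow_dvd_dvd]
  intro q k hq hqk
  rcases Nat.eq_zero_or_pos k with hk0 | hk0
  · simp [hk0]
  have ht0 : t ≠ 0 := by omega
  have hqd : q ∣ d := (dvd_pow_self q hk0.ne').trans hqk
  have hkd : q ^ k ∣ d := hqk
  have hA : (q - 1) ∣ t := aux_A t ht E hcofin f d hd hq hqd
  by_cases hpar : t % 2 = 1
  · -- t odd
    have hq2 : q = 2 := by
      by_contra hne
      have hoddq : q % 2 = 1 := hq.eq_two_or_odd.resolve_left hne
      have h2 : 2 ∣ q - 1 := by omega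
      have h3 : 2 ∣ t := h2.trans hA
      omega
    subst hq2
    have hk1 : k ≤ 1 := by
      by_contra hcon
      push_neg at hcon
      have h4d : (4 : ℕ) ∣ d := by
        refine dvd_trans ?_ hkd
        have := pow_dvd_pow 2 (show 2 ≤ k by omega)
        norm_num at this ⊢
        exact this
      haveI : NeZero (4 : ℕ) := ⟨by norm_num⟩
      have ha : IsUnit (((3 : ℕ)) : ZMod 4) := by decide
      obtain ⟨p, hp, -, hpa, hdvd⟩ := aux_work t E hcofin f d hd 4 h4d ha
      have h1 : ((p : ZMod 4)) ^ t = 1 := aux_cast_pow_eq_one hp.two_le hdvd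
      rw [hpa] at h1
      have h3 : (((3 : ℕ)) : ZMod 4) = -1 := by decide
      rw [h3, Odd.neg_one_pow (Nat.odd_iff.mpr hpar)] at h1
      exact absurd h1.symm (by decide)
    have hN : Npaper t = 2 := by simp [Npaper, ht0, hpar]
    rw [hN]
    calc (2 : ℕ) ^ k ∣ 2 ^ 1 := pow_dvd_pow 2 hk1
      _ = 2 := pow_one 2
  · -- t even
    have hpar2 : t % 2 = 0 := by omega
    have heven : Even t := Nat.even_iff.mpr hpar2
    have hN : Npaper t = 2 * ∏ p ∈ Finset.filter (fun p => p.Prime ∧ (p - 1) ∣ t)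
        (Finset.range (t + 2)), p ^ (t.factorization p + 1) := by
      simp [Npaper, ht0, hpar]
    have hqmem : q ∈ Finset.filter (fun p => p.Prime ∧ (p - 1) ∣ t) (Finset.range (t + 2)) := by
      rw [Finset.mem_filter, Finset.mem_range]
      have hle : q - 1 ≤ t := Nat.le_of_dvd (by omega) hA
      exact ⟨by have := hq.two_le; omega, hq, hA⟩
    have hprod : q ^ (t.factorization q + 1) ∣ ∏ p ∈ Finset.filter
        (fun p => p.Prime ∧ (p - 1) ∣ t) (Finset.range (t + 2)),
        p ^ (t.factorization p + 1) := Finset.dvd_prod_of_mem _ hqmem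
    have hfac : t.factorization q = padicValNat q t := Nat.factorization_def t hq
    rw [hN]
    by_cases hq2 : q = 2
    · subst hq2
      have hk2 : k ≤ t.factorization 2 + 2 := by
        rcases le_or_gt k 2 with h | h
        · omega
        · have := aux_C t ht E hcofin f d hd (by omega) heven hkd
          omega
      calc (2 : ℕ) ^ k ∣ 2 ^ (t.factorization 2 + 2) := pow_dvd_pow 2 hk2
        _ = 2 * 2 ^ (t.factorization 2 + 1) := by ring
        _ ∣ 2 * ∏ p ∈ Finset.filter (fun p => p.Prime ∧ (p - 1) ∣ t)
            (Finset.range (t + 2)), p ^ (t.factorization p + 1) :=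
          mul_dvd_mul_left 2 hprod
    · have hodd : Odd q := hq.odd_of_ne_two hq2
      have hk2 : k ≤ t.factorization q + 1 := by
        rcases le_or_gt k 1 with h | h
        · omega
        · have := aux_B t ht E hcofin f d hd hq hodd (by omega) hkd
          omega
      calc q ^ k ∣ q ^ (t.factorization q + 1) := pow_dvd_pow q hk2
        _ ∣ ∏ p ∈ Finset.filter (fun p => p.Prime ∧ (p - 1) ∣ t)
            (Finset.range (t + 2)), p ^ (t.factorization p + 1) := hprod
        _ ∣ 2 * ∏ p ∈ Finset.filter (fun p => p.Prime ∧ (p - 1) ∣ t)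
            (Finset.range (t + 2)), p ^ (t.factorization p + 1) := Dvd.dvd.mul_left dvd_rfl 2
end

section
/- Let t ≥ 1 and c ≥ 1 be natural numbers. If the exponent of the unit group (ℤ/cℤ)^× divides t, then c divides N_t. -/
lemma aux_dvd_pow_sub_one {c m t : ℕ} [NeZero c] (hmc : m ∣ c)
    (h : Monoid.exponent (ZMod c)ˣ ∣ t) {x : ℕ} (hx : x.Coprime m) :
    (m : ℤ) ∣ (x : ℤ) ^ t - 1 := by
  have hm : NeZero m := ⟨fun hm0 => (NeZero.ne c) (eq_zero_of_zero_dvd (hm0 ▸ hmc))⟩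
  have hdvd : Monoid.exponent (ZMod m)ˣ ∣ t :=
    dvd_trans (MonoidHom.exponent_dvd (ZMod.unitsMap_surjective hmc)) h
  have hu : (ZMod.unitOfCoprime x hx) ^ t = 1 :=
    orderOf_dvd_iff_pow_eq_one.mp (dvd_trans (Monoid.order_dvd_exponent _) hdvd)
  have hx1 : ((x : ZMod m)) ^ t = 1 := by
    have := congrArg (Units.val) hu
    simpa [ZMod.coe_unitOfCoprime] using this
  have : (((x : ℤ) ^ t - 1 : ℤ) : ZMod m) = 0 := by push_cast [hx1]; ring
  exact (ZMod.intCast_zmod_eq_zero_iff_dvd _ m).mp this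

lemma aux_emult_t {q t : ℕ} (hq : q.Prime) (ht : t ≠ 0) :
    emultiplicity q t = (t.factorization q : ℕ∞) := by
  have hfin : FiniteMultiplicity q t :=
    Nat.finiteMultiplicity_iff.mpr ⟨hq.ne_one, Nat.pos_of_ne_zero ht⟩
  rw [hfin.emultiplicity_eq_multiplicity, Nat.multiplicity_eq_factorization hq ht]

lemma aux_odd_bound {q a t : ℕ} (hq : q.Prime) (hodd : Odd q) (ht : t ≠ 0)
    (hdvd : ((q : ℤ)) ^ a ∣ ((q : ℤ) + 1) ^ t - 1) :
    a ≤ t.factorization q + 1 := by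
  have hxy : (q : ℤ) ∣ ((q : ℤ) + 1) - 1 := by simp
  have hx : ¬ (q : ℤ) ∣ ((q : ℤ) + 1) := by
    intro hd
    have h1 : (q : ℤ) ∣ 1 := (dvd_add_right (dvd_refl _)).mp hd
    have := Int.le_of_dvd one_pos h1
    have := hq.two_le
    omega
  have key := Int.emultiplicity_pow_sub_pow hq hodd hxy hx t
  have hself : emultiplicity ((q : ℤ)) ((q : ℤ) + 1 - 1) = 1 := by
    have hfin : FiniteMultiplicity (q : ℤ) (q : ℤ) := by
      rw [Int.finiteMultiplicity_iff]
      constructor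
      · simpa using hq.ne_one
      · exact_mod_cast hq.ne_zero
    simpa using hfin.emultiplicity_self
  have hle : (a : ℕ∞) ≤ emultiplicity ((q : ℤ)) (((q : ℤ) + 1) ^ t - 1) :=
    le_emultiplicity_of_pow_dvd (by simpa using hdvd)
  rw [show ((q:ℤ)+1)^t - 1 = ((q:ℤ)+1)^t - 1^t by ring] at hle
  rw [key, hself, aux_emult_t hq ht] at hle
  have : (a : ℕ∞) ≤ ((t.factorization q + 1 : ℕ) : ℕ∞) := by
    convert hle using 1
    push_cast
    ring
  exact_mod_cast this

lemma aux_two_bound {a t : ℕ} (ht : t ≠ 0)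
    (hdvd : (2 : ℤ) ^ a ∣ (5 : ℤ) ^ t - 1) :
    a ≤ t.factorization 2 + 2 := by
  have key := _root_.Int.two_pow_sub_pow' (x := 5) (y := 1) t (by norm_num) (by norm_num)
  have hle : (a : ℕ∞) ≤ emultiplicity (2 : ℤ) ((5:ℤ) ^ t - 1) :=
    le_emultiplicity_of_pow_dvd (by simpa using hdvd)
  rw [show (5:ℤ)^t - 1 = (5:ℤ)^t - 1^t by ring, key] at hle
  have h4 : emultiplicity (2:ℤ) ((5:ℤ) - 1) = 2 := by
    have : ((5:ℤ) - 1) = 2 ^ 2 := by norm_num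
    rw [this, emultiplicity_pow_self (by norm_num) Int.prime_two.not_unit]; rfl
  rw [h4] at hle
  rw [show (2:ℤ) = ((2:ℕ):ℤ) from by simp, Int.natCast_emultiplicity,
    aux_emult_t Nat.prime_two ht] at hle
  have : (a : ℕ∞) ≤ ((t.factorization 2 + 2 : ℕ) : ℕ∞) := by
    convert hle using 1
    push_cast
    ring
  exact_mod_cast this

lemma aux_sub_one_dvd {q t c : ℕ} [NeZero c] (hq : q.Prime) (hqc : q ∣ c)
    (h : Monoid.exponent (ZMod c)ˣ ∣ t) : (q - 1) ∣ t := by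
  haveI := Fact.mk hq
  have hd : Monoid.exponent (ZMod q)ˣ ∣ t :=
    dvd_trans (MonoidHom.exponent_dvd (ZMod.unitsMap_surjective hqc)) h
  rwa [IsCyclic.exponent_eq_card, Nat.card_eq_fintype_card, ZMod.card_units_eq_totient,
    Nat.totient_prime hq] at hd

/-- If the exponent of `(ℤ/cℤ)ˣ` divides `t`, then `c ∣ N t`. -/
theorem stmt_1 (t c : ℕ) (ht : 1 ≤ t) (hc : 1 ≤ c)
    (h : Monoid.exponent (ZMod c)ˣ ∣ t) :
    c ∣ Npaper t := by
  haveI : NeZero c := ⟨by omega⟩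
  rcases Nat.even_or_odd t with hev | hod
  case inr =>
    -- t odd : Npaper t = 2 and c ∣ 2
    have hN : Npaper t = 2 := by
      rw [Npaper, if_neg (by omega), if_pos (Nat.odd_iff.mp hod)]
    rw [hN]
    have hu : ((-1 : (ZMod c)ˣ)) ^ t = 1 :=
      orderOf_dvd_iff_pow_eq_one.mp (dvd_trans (Monoid.order_dvd_exponent _) h)
    have hv : ((-1 : ZMod c)) ^ t = 1 := by
      have := congrArg (Units.val) hu
      simpa using this
    rw [hod.neg_one_pow] at hv
    have h2 : ((2:ℕ) : ZMod c) = 0 := by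
      push_cast
      linear_combination -hv
    exact (ZMod.natCast_eq_zero_iff 2 c).mp h2
  case inl =>
    set S := Finset.filter (fun p => p.Prime ∧ (p - 1) ∣ t) (Finset.range (t + 2)) with hS
    have hN : Npaper t = 2 * ∏ p ∈ S, p ^ (t.factorization p + 1) := by
      rw [Npaper, if_neg (by omega), if_neg (by rw [Nat.even_iff] at hev; omega)]
    have hN0 : Npaper t ≠ 0 := by
      rw [hN]
      refine Nat.mul_ne_zero (by norm_num) (Finset.prod_ne_zero_iff.mpr fun p hp => ?_)
      exact pow_ne_zero _ (Finset.mem_filter.mp hp).2.1.ne_zero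
    rw [← Nat.factorization_le_iff_dvd (by omega) hN0, Finsupp.le_def]
    intro q
    by_cases hq : q.Prime
    swap
    · simp [Nat.factorization_eq_zero_of_not_prime _ hq]
    set a := c.factorization q with ha
    rcases Nat.eq_zero_or_pos a with ha0 | ha0
    · simp [ha0]
    have hqa : q ^ a ∣ c := Nat.ordProj_dvd c q
    have hqc : q ∣ c := dvd_trans (dvd_pow_self q (by omega)) hqa
    have hq1t : (q - 1) ∣ t := aux_sub_one_dvd hq hqc h
    have hmem : q ∈ S := by
      refine Finset.mem_filter.mpr ⟨Finset.mem_range.mpr ?_, hq, hq1t⟩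
      have h1 : q - 1 ≤ t := Nat.le_of_dvd (by omega) hq1t
      have := hq.two_le
      omega
    have hprodvd : q ^ (t.factorization q + 1) ∣ ∏ p ∈ S, p ^ (t.factorization p + 1) :=
      Finset.dvd_prod_of_mem _ hmem
    suffices hsuff : q ^ a ∣ Npaper t from
      (Nat.Prime.pow_dvd_iff_le_factorization hq hN0).mp hsuff
    rcases eq_or_ne q 2 with rfl | hq2
    · have hcop : Nat.Coprime 5 (2 ^ a) := Nat.Coprime.pow_right _ (by norm_num)
      have hd := aux_dvd_pow_sub_one hqa h hcop
      have hb : a ≤ t.factorization 2 + 2 := by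
        apply aux_two_bound (by omega)
        push_cast at hd
        exact_mod_cast hd
      calc (2:ℕ) ^ a ∣ 2 ^ (t.factorization 2 + 2) := pow_dvd_pow 2 hb
        _ = 2 * 2 ^ (t.factorization 2 + 1) := by ring
        _ ∣ Npaper t := by rw [hN]; exact mul_dvd_mul_left 2 hprodvd
    · have hodd : Odd q := hq.odd_of_ne_two hq2
      have hcop : Nat.Coprime (q + 1) (q ^ a) :=
        Nat.Coprime.pow_right _ (by simp)
      have hd := aux_dvd_pow_sub_one hqa h hcop
      have hb : a ≤ t.factorization q + 1 := by
        apply aux_odd_bound hq hodd (by omega)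
        push_cast at hd
        exact_mod_cast hd
      calc q ^ a ∣ q ^ (t.factorization q + 1) := pow_dvd_pow q hb
        _ ∣ Npaper t := by rw [hN]; exact dvd_mul_of_dvd_right hprodvd 2
end

section
/- Let t ≥ 1 and c ≥ 1 be natural numbers. If c divides p^t − 1 for all but finitely many prime numbers p, then the exponent of the unit group (ℤ/cℤ)^× divides t. -/
/-- If `c` divides `p^t - 1` for all but finitely many primes `p`, then the exponent
of `(ZMod c)ˣ` divides `t`. -/
theorem stmt_2 (t c : ℕ) (ht : 1 ≤ t) (hc : 1 ≤ c)
    (h : {p : ℕ | Nat.Prime p ∧ ¬ c ∣ p ^ t - 1}.Finite) :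
    Monoid.exponent (ZMod c)ˣ ∣ t := by
  have : NeZero c := ⟨by omega⟩
  apply Monoid.exponent_dvd_of_forall_pow_eq_one
  intro u
  have hinf := Nat.infinite_setOfPred_prime_and_eq_mod (q := c) (a := (u : ZMod c)) u.isUnit
  obtain ⟨p, hp, hpe⟩ := (hinf.diff h).nonempty
  simp only [Set.mem_setOf_eq] at hp hpe
  push_neg at hpe
  have hdvd : c ∣ p ^ t - 1 := hpe hp.1
  have hp1 : 1 ≤ p ^ t := Nat.one_le_pow _ _ hp.1.pos
  have : ((p ^ t - 1 : ℕ) : ZMod c) = 0 := (ZMod.natCast_eq_zero_iff _ _).2 hdvd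
  have hpt : ((p : ZMod c)) ^ t = 1 := by
    have h2 := congrArg (Nat.cast : ℕ → ZMod c) (Nat.sub_add_cancel hp1)
    rw [Nat.cast_add, this, Nat.cast_one, zero_add, Nat.cast_pow] at h2
    exact h2.symm
  ext
  rw [hp.2] at hpt
  simpa using hpt
end

section
/- Let t ≥ 1 and c ≥ 1 be natural numbers. If c divides p^t − 1 for all but finitely many prime numbers p, then c divides N_t. -/
lemma exists_good_prime {t c : ℕ}
    (h : {p : ℕ | Nat.Prime p ∧ ¬ c ∣ p ^ t - 1}.Finite) (m : ℕ) [NeZero m]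
    (a : ZMod m) (ha : IsUnit a) :
    ∃ p : ℕ, p.Prime ∧ (p : ZMod m) = a ∧ c ∣ p ^ t - 1 := by
  obtain ⟨p, hp⟩ := ((Nat.infinite_setOfPred_prime_and_eq_mod ha).diff h).nonempty
  refine ⟨p, hp.1.1, hp.1.2, ?_⟩
  by_contra hn
  exact hp.2 ⟨hp.1.1, hn⟩

lemma pow_eq_one_zmod {p t c m : ℕ} (hp : 0 < p) (hm : m ∣ c) (hd : c ∣ p ^ t - 1) :
    (p : ZMod m) ^ t = 1 := by
  have h1 : 1 ≤ p ^ t := Nat.one_le_pow _ _ hp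
  have hdvd : m ∣ p ^ t - 1 := hm.trans hd
  have h0 := (ZMod.natCast_eq_zero_iff _ m).mpr hdvd
  rw [Nat.cast_sub h1] at h0
  push_cast at h0
  exact sub_eq_zero.mp h0

lemma sub_one_dvd {t c q : ℕ} (h : {p : ℕ | Nat.Prime p ∧ ¬ c ∣ p ^ t - 1}.Finite)
    (hq : q.Prime) (hqc : q ∣ c) : (q - 1) ∣ t := by
  haveI : Fact q.Prime := ⟨hq⟩
  obtain ⟨g, hg⟩ := IsCyclic.exists_generator (α := (ZMod q)ˣ)
  obtain ⟨p, hp, hpa, hpc⟩ := exists_good_prime h q (g : ZMod q) g.isUnit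
  have h1 : ((p : ZMod q)) ^ t = 1 := pow_eq_one_zmod hp.pos hqc hpc
  rw [hpa] at h1
  have hg1 : g ^ t = 1 := Units.ext (by rw [Units.val_pow_eq_pow_val, h1, Units.val_one])
  have hdvd := orderOf_dvd_of_pow_eq_one hg1
  rwa [orderOf_eq_card_of_forall_mem_zpowers hg, Nat.card_eq_fintype_card,
    ZMod.card_units_eq_totient, Nat.totient_prime hq] at hdvd

lemma odd_prime_val {t c q : ℕ} (ht : t ≠ 0)
    (h : {p : ℕ | Nat.Prime p ∧ ¬ c ∣ p ^ t - 1}.Finite)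
    (hq : q.Prime) (hq2 : q ≠ 2) :
    c.factorization q ≤ t.factorization q + 1 := by
  haveI : Fact q.Prime := ⟨hq⟩
  have hq3 : 3 ≤ q := by rcases hq.two_le.lt_or_eq with h' | h'; omega; omega
  haveI : NeZero (q ^ 2) := ⟨pow_ne_zero 2 hq.ne_zero⟩
  have hunit : IsUnit ((1 + q : ℕ) : ZMod (q ^ 2)) := by
    rw [ZMod.isUnit_iff_coprime]
    exact Nat.Coprime.pow_right 2 (by simp [Nat.Coprime, Nat.add_comm 1 q])
  obtain ⟨p, hp, hpa, hpc⟩ := exists_good_prime h (q ^ 2) _ hunit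
  have hmod : p ≡ 1 + q [MOD q ^ 2] := (ZMod.natCast_eq_natCast_iff _ _ _).mp hpa
  have hp1 : 1 < p := hp.one_lt
  have hmodq : p ≡ 1 [MOD q] := by
    have h1 : p ≡ 1 + q [MOD q] := hmod.of_dvd (dvd_pow_self q two_ne_zero)
    have h2 : 1 + q ≡ 1 + 0 [MOD q] := Nat.ModEq.add_left 1 (Nat.modEq_zero_iff_dvd.mpr dvd_rfl)
    simpa using h1.trans h2
  have hqp1 : q ∣ p - 1 := (Nat.modEq_iff_dvd' hp1.le).mp hmodq.symm
  have hq2p : ¬ q ^ 2 ∣ p - 1 := by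
    intro hd
    have h1 : p ≡ 1 [MOD q ^ 2] := ((Nat.modEq_iff_dvd' hp1.le).mpr hd).symm
    have h2 : (1 : ℕ) ≡ 1 + q [MOD q ^ 2] := h1.symm.trans hmod
    have h3 : q ^ 2 ∣ q := by simpa using (Nat.modEq_iff_dvd' (by omega)).mp h2
    have := Nat.le_of_dvd (by omega) h3
    nlinarith
  have hqp : ¬ q ∣ p := by
    intro hd
    have : q ∣ p - (p - 1) := Nat.dvd_sub hd hqp1
    rw [Nat.sub_sub_self hp1.le] at this
    exact absurd (Nat.le_of_dvd one_pos this) (by omega)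
  have hodd : Odd q := hq.odd_of_ne_two hq2
  have hlte := padicValNat.pow_sub_pow (p := q) (x := p) (y := 1) hodd hp1 (by simpa using hqp1) hqp ht
  have hpt1 : p ^ t - 1 ≠ 0 := by
    have : 2 ≤ p ^ t := by
      calc 2 ≤ p := hp1
      _ = p ^ 1 := (pow_one p).symm
      _ ≤ p ^ t := Nat.pow_le_pow_right (by omega) (by omega)
    omega
  have hv1 : (p - 1).factorization q = 1 := by
    have hne : p - 1 ≠ 0 := by omega
    have hle : 1 ≤ (p - 1).factorization q :=
      (hq.pow_dvd_iff_le_factorization hne).mp (by simpa using hqp1)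
    have hlt : ¬ 2 ≤ (p - 1).factorization q := fun h2 =>
      hq2p ((hq.pow_dvd_iff_le_factorization hne).mpr h2)
    omega
  have hfact : (p ^ t - 1).factorization q = 1 + t.factorization q := by
    rw [Nat.factorization_def _ hq]
    rw [show p ^ t - 1 = p ^ t - 1 ^ t by simp]
    rw [hlte, ← Nat.factorization_def _ hq, ← Nat.factorization_def _ hq, hv1]
  have hdc : q ^ (c.factorization q) ∣ p ^ t - 1 := (Nat.ordProj_dvd c q).trans hpc
  have := (hq.pow_dvd_iff_le_factorization hpt1).mp hdc
  omega

lemma two_val_even {t c : ℕ} (ht : t ≠ 0) (hte : Even t)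
    (h : {p : ℕ | Nat.Prime p ∧ ¬ c ∣ p ^ t - 1}.Finite) :
    c.factorization 2 ≤ t.factorization 2 + 2 := by
  have hunit : IsUnit ((3 : ℕ) : ZMod 8) := by decide
  obtain ⟨p, hp, hpa, hpc⟩ := exists_good_prime h 8 _ hunit
  have hmod : p % 8 = 3 := by
    have := (ZMod.natCast_eq_natCast_iff _ _ _).mp hpa
    simpa [Nat.ModEq] using this
  have hp1 : 1 < p := hp.one_lt
  have h2d : 2 ∣ p - 1 := by omega
  have h4nd : ¬ 4 ∣ p - 1 := by omega
  have h4d : 4 ∣ p + 1 := by omega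
  have h8nd : ¬ 8 ∣ p + 1 := by omega
  have h2p : ¬ 2 ∣ p := by omega
  have hlte := padicValNat.pow_two_sub_pow (x := p) (y := 1) hp1 (by simpa using h2d)
    h2p ht hte
  have hpt1 : p ^ t - 1 ≠ 0 := by
    have : 2 ≤ p ^ t := by
      calc 2 ≤ p := hp1
      _ = p ^ 1 := (pow_one p).symm
      _ ≤ p ^ t := Nat.pow_le_pow_right (by omega) (by omega)
    omega
  have two_prime : Nat.Prime 2 := Nat.prime_two
  have hv1 : (p - 1).factorization 2 = 1 := by
    have hne : p - 1 ≠ 0 := by omega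
    have hle : 1 ≤ (p - 1).factorization 2 :=
      (two_prime.pow_dvd_iff_le_factorization hne).mp (by simpa using h2d)
    have hlt : ¬ 2 ≤ (p - 1).factorization 2 := fun h2 =>
      h4nd (by simpa using (two_prime.pow_dvd_iff_le_factorization hne).mpr h2)
    omega
  have hv2 : (p + 1).factorization 2 = 2 := by
    have hne : p + 1 ≠ 0 := by omega
    have hle : 2 ≤ (p + 1).factorization 2 :=
      (two_prime.pow_dvd_iff_le_factorization hne).mp (by simpa using h4d)
    have hlt : ¬ 3 ≤ (p + 1).factorization 2 := fun h2 =>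
      h8nd (by simpa using (two_prime.pow_dvd_iff_le_factorization hne).mpr h2)
    omega
  have hfact : (p ^ t - 1).factorization 2 = 2 + t.factorization 2 := by
    have e1 := hlte
    rw [show p ^ t - 1 ^ t = p ^ t - 1 by simp] at e1
    have e2 : (p ^ t - 1).factorization 2 = padicValNat 2 (p ^ t - 1) :=
      Nat.factorization_def _ two_prime
    have e3 : (p - 1).factorization 2 = padicValNat 2 (p - 1) :=
      Nat.factorization_def _ two_prime
    have e4 : (p + 1).factorization 2 = padicValNat 2 (p + 1) :=
      Nat.factorization_def _ two_prime
    have e5 : t.factorization 2 = padicValNat 2 t := Nat.factorization_def _ two_prime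
    omega
  have hdc : 2 ^ (c.factorization 2) ∣ p ^ t - 1 := (Nat.ordProj_dvd c 2).trans hpc
  have := (two_prime.pow_dvd_iff_le_factorization hpt1).mp hdc
  omega

lemma two_val_odd {t c : ℕ} (hto : t % 2 = 1)
    (h : {p : ℕ | Nat.Prime p ∧ ¬ c ∣ p ^ t - 1}.Finite) :
    c.factorization 2 ≤ 1 := by
  have hunit : IsUnit ((3 : ℕ) : ZMod 4) := by decide
  obtain ⟨p, hp, hpa, hpc⟩ := exists_good_prime h 4 _ hunit
  have hmod : p % 4 = 3 := by
    have := (ZMod.natCast_eq_natCast_iff _ _ _).mp hpa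
    simpa [Nat.ModEq] using this
  have hp1 : 1 < p := hp.one_lt
  have hpow : p ^ t % 4 = 3 := by
    obtain ⟨k, hk⟩ : ∃ k, t = 2 * k + 1 := ⟨t / 2, by omega⟩
    have h9 : p ^ 2 ≡ 1 [MOD 4] := by
      have : p ^ 2 % 4 = (p % 4) ^ 2 % 4 := by
        conv_lhs => rw [Nat.pow_mod]
      simp [Nat.ModEq, this, hmod]
    have : p ^ t ≡ 1 ^ k * p [MOD 4] := by
      rw [hk, pow_add, pow_mul, pow_one]
      exact Nat.ModEq.mul (h9.pow k) Nat.ModEq.rfl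
    simpa [Nat.ModEq, hmod] using this
  by_contra hcon
  have h4c : (4 : ℕ) ∣ c := by
    have : (2 : ℕ) ^ 2 ∣ 2 ^ (c.factorization 2) := pow_dvd_pow 2 (by omega)
    exact (by simpa using this : (4:ℕ) ∣ 2 ^ (c.factorization 2)).trans (Nat.ordProj_dvd c 2)
  have h4 : (4 : ℕ) ∣ p ^ t - 1 := h4c.trans hpc
  have hge : 1 ≤ p ^ t := Nat.one_le_pow _ _ (by omega)
  omega

/-- If `c` divides `p^t - 1` for all but finitely many primes `p`, then `c ∣ N t`. -/
theorem stmt_3 (t c : ℕ) (ht : 1 ≤ t) (hc : 1 ≤ c)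
    (h : {p : ℕ | Nat.Prime p ∧ ¬ c ∣ p ^ t - 1}.Finite) :
    c ∣ Npaper t := by
  have ht0 : t ≠ 0 := by omega
  have hc0 : c ≠ 0 := by omega
  by_cases hodd : t % 2 = 1
  · -- odd case : Npaper t = 2
    have hN : Npaper t = 2 := by simp [Npaper, ht0, hodd]
    rw [hN]
    rw [← Nat.factorization_le_iff_dvd hc0 (by norm_num)]
    intro q
    by_cases hq2 : q = 2
    · subst hq2
      have h1 := two_val_odd hodd h
      have h2 : (2 : ℕ).factorization 2 = 1 := by
        simp [Nat.Prime.factorization Nat.prime_two]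
      omega
    · have hzero : c.factorization q = 0 := by
        by_contra hne
        have hqp : q.Prime := Nat.prime_of_mem_primeFactors
          ((Nat.support_factorization _) ▸ Finsupp.mem_support_iff.mpr hne)
        have hqc : q ∣ c := Nat.dvd_of_factorization_pos hne
        have hdvd := sub_one_dvd h hqp hqc
        have hq3 : 3 ≤ q := by
          rcases hqp.two_le.lt_or_eq with h' | h'; omega; omega
        have hqodd : ¬ 2 ∣ q := by
          intro hd
          rcases (Nat.prime_dvd_prime_iff_eq Nat.prime_two hqp).mp hd with rfl
          omega
        have h2d : 2 ∣ q - 1 := by omega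
        have : (2 : ℕ) ∣ t := dvd_trans h2d hdvd
        omega
      simp [hzero]
  · -- even case
    have hte : Even t := Nat.even_iff.mpr (by omega)
    have hN : Npaper t = 2 * ∏ p ∈ Finset.filter (fun p => p.Prime ∧ (p - 1) ∣ t)
        (Finset.range (t + 2)), p ^ (t.factorization p + 1) := by
      simp [Npaper, ht0, hodd]
    set F := Finset.filter (fun p => p.Prime ∧ (p - 1) ∣ t) (Finset.range (t + 2)) with hF
    set P := ∏ p ∈ F, p ^ (t.factorization p + 1) with hPdef
    have hP0 : P ≠ 0 := by
      rw [hPdef]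
      apply Finset.prod_ne_zero_iff.mpr
      intro p hpF
      have hp := (Finset.mem_filter.mp hpF).2.1
      exact pow_ne_zero _ hp.ne_zero
    have hN0 : Npaper t ≠ 0 := by rw [hN]; positivity
    rw [← Nat.factorization_le_iff_dvd hc0 hN0]
    intro q
    by_cases hze : c.factorization q = 0
    · simp [hze]
    · have hqp : q.Prime := Nat.prime_of_mem_primeFactors
        ((Nat.support_factorization _) ▸ Finsupp.mem_support_iff.mpr hze)
      have hqc : q ∣ c := Nat.dvd_of_factorization_pos hze
      have hdvdt := sub_one_dvd h hqp hqc
      have hmemF : q ∈ F := by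
        rw [hF, Finset.mem_filter, Finset.mem_range]
        refine ⟨?_, hqp, hdvdt⟩
        have hle : q - 1 ≤ t := Nat.le_of_dvd (by omega) hdvdt
        have := hqp.two_le
        omega
      have hdvdP : q ^ (t.factorization q + 1) ∣ P := Finset.dvd_prod_of_mem _ hmemF
      have hkey : q ^ (c.factorization q) ∣ Npaper t := by
        by_cases hq2 : q = 2
        · subst hq2
          have hle := two_val_even ht0 hte h
          calc (2:ℕ) ^ (c.factorization 2) ∣ 2 ^ (t.factorization 2 + 2) :=
                pow_dvd_pow 2 hle
          _ = 2 * 2 ^ (t.factorization 2 + 1) := by ring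
          _ ∣ 2 * P := mul_dvd_mul_left 2 hdvdP
          _ = Npaper t := hN.symm
        · have hle := odd_prime_val ht0 h hqp hq2
          calc q ^ (c.factorization q) ∣ q ^ (t.factorization q + 1) :=
                pow_dvd_pow q hle
          _ ∣ P := hdvdP
          _ ∣ 2 * P := Dvd.intro_left 2 rfl
          _ = Npaper t := hN.symm
      exact (hqp.pow_dvd_iff_le_factorization hN0).mp hkey
end

section
/- For all natural numbers j and k, the greatest common divisor gcd(N_j, N_k) divides N_{j+k}. -/
lemma prod_ne_zero (t : ℕ) :
    (∏ p ∈ Finset.filter (fun p => p.Prime ∧ (p - 1) ∣ t) (Finset.range (t + 2)),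
      p ^ (t.factorization p + 1)) ≠ 0 := by
  rw [Finset.prod_ne_zero_iff]
  intro p hp
  simp only [Finset.mem_filter] at hp
  exact pow_ne_zero _ hp.2.1.ne_zero

lemma Npaper_ne_zero {t : ℕ} (h : t ≠ 0) : Npaper t ≠ 0 := by
  unfold Npaper
  rw [if_neg h]
  split
  · norm_num
  · exact mul_ne_zero two_ne_zero (prod_ne_zero t)

lemma fact_Npaper {t : ℕ} (h0 : t ≠ 0) (h2 : ¬ t % 2 = 1) (p : ℕ) (hp : p.Prime) :
    (Npaper t).factorization p =
      (if p = 2 then 1 else 0) + (if (p - 1) ∣ t then t.factorization p + 1 else 0) := by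
  unfold Npaper
  rw [if_neg h0, if_neg h2, Nat.factorization_mul two_ne_zero (prod_ne_zero t),
    Nat.factorization_prod (fun q hq => by
      simp only [Finset.mem_filter] at hq
      exact pow_ne_zero _ hq.2.1.ne_zero)]
  simp only [Finsupp.coe_add, Pi.add_apply, Finsupp.finset_sum_apply]
  congr 1
  · rw [Nat.Prime.factorization Nat.prime_two]
    simp [Finsupp.single_apply, eq_comm]
  · by_cases hd : (p - 1) ∣ t
    · have hmem : p ∈ Finset.filter (fun p => p.Prime ∧ (p - 1) ∣ t) (Finset.range (t + 2)) := by
        simp only [Finset.mem_filter, Finset.mem_range]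
        refine ⟨?_, hp, hd⟩
        have : p - 1 ≤ t := Nat.le_of_dvd (Nat.pos_of_ne_zero h0) hd
        omega
      rw [if_pos hd, Finset.sum_eq_single p, Nat.Prime.factorization_pow hp,
        Finsupp.single_apply, if_pos rfl]
      · intro q hq hqp
        simp only [Finset.mem_filter] at hq
        rw [Nat.Prime.factorization_pow hq.2.1, Finsupp.single_apply, if_neg hqp]
      · intro h; exact absurd hmem h
    · rw [if_neg hd, Finset.sum_eq_zero]
      intro q hq
      simp only [Finset.mem_filter] at hq
      rw [Nat.Prime.factorization_pow hq.2.1, Finsupp.single_apply, if_neg]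
      rintro rfl
      exact hd hq.2.2

/-- `gcd (N j) (N k) ∣ N (j + k)`. -/
theorem stmt_4 (j k : ℕ) : Nat.gcd (Npaper j) (Npaper k) ∣ Npaper (j + k) := by
  rcases eq_or_ne j 0 with rfl | hj
  · simp [Npaper]
  rcases eq_or_ne k 0 with rfl | hk
  · simp [Npaper]
  by_cases hjo : j % 2 = 1
  · by_cases hko : k % 2 = 1
    · -- both odd, j+k even
      have h1 : Npaper j = 2 := by unfold Npaper; rw [if_neg hj, if_pos hjo]
      have h2 : Npaper k = 2 := by unfold Npaper; rw [if_neg hk, if_pos hko]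
      have hjk : ¬ (j + k) % 2 = 1 := by omega
      have hjk0 : j + k ≠ 0 := by omega
      rw [h1, h2]
      unfold Npaper
      rw [if_neg hjk0, if_neg hjk]
      exact dvd_mul_right 2 _
    · -- j odd, k even, j+k odd
      have h1 : Npaper j = 2 := by unfold Npaper; rw [if_neg hj, if_pos hjo]
      have hjk : (j + k) % 2 = 1 := by omega
      have hjk0 : j + k ≠ 0 := by omega
      have h3 : Npaper (j + k) = 2 := by unfold Npaper; rw [if_neg hjk0, if_pos hjk]
      rw [h3, ← h1]
      exact Nat.gcd_dvd_left _ _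
  · by_cases hko : k % 2 = 1
    · have h1 : Npaper k = 2 := by unfold Npaper; rw [if_neg hk, if_pos hko]
      have hjk : (j + k) % 2 = 1 := by omega
      have hjk0 : j + k ≠ 0 := by omega
      have h3 : Npaper (j + k) = 2 := by unfold Npaper; rw [if_neg hjk0, if_pos hjk]
      rw [h3, ← h1]
      exact Nat.gcd_dvd_right _ _
    · -- both even
      have hjk0 : j + k ≠ 0 := by omega
      have hjko : ¬ (j + k) % 2 = 1 := by omega
      have hNj := Npaper_ne_zero hj
      have hNk := Npaper_ne_zero hk
      have hg : Nat.gcd (Npaper j) (Npaper k) ≠ 0 := Nat.gcd_ne_zero_left hNj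
      rw [← Nat.factorization_le_iff_dvd hg (Npaper_ne_zero hjk0)]
      rw [Nat.factorization_gcd hNj hNk]
      intro p
      rw [Finsupp.inf_apply]
      by_cases hp : p.Prime
      · rw [fact_Npaper hj hjo p hp, fact_Npaper hk hko p hp,
          fact_Npaper hjk0 hjko p hp]
        by_cases hdj : (p - 1) ∣ j
        · by_cases hdk : (p - 1) ∣ k
          · have hdjk : (p - 1) ∣ (j + k) := Nat.dvd_add hdj hdk
            rw [if_pos hdj, if_pos hdk, if_pos hdjk]
            have hmin : min (j.factorization p) (k.factorization p) ≤ (j + k).factorization p := by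
              have hgd : Nat.gcd j k ∣ j + k := Nat.dvd_add (Nat.gcd_dvd_left j k) (Nat.gcd_dvd_right j k)
              have := (Nat.factorization_le_iff_dvd (Nat.gcd_ne_zero_left hj) hjk0).mpr hgd p
              rwa [Nat.factorization_gcd hj hk, Finsupp.inf_apply] at this
            omega
          · rw [if_pos hdj, if_neg hdk]
            split <;> split <;> omega
        · rw [if_neg hdj]
          split <;> split <;> split <;> omega
      · simp [Nat.factorization_eq_zero_of_not_prime _ hp]
end

section
/- Let R be a commutative ring and let A be a formal power series over R with constant coefficient 1 such that N_i · (coefficient of X^i in A) = 0 for every i ≥ 1. Then A is invertible in R⟦X⟧, and its inverse B satisfies N_i · (coefficient of X^i in B) = 0 for every i ≥ 1. -/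
lemma Npaper_odd (t : ℕ) (h : t % 2 = 1) : Npaper t = 2 := by
  have : t ≠ 0 := by omega
  simp [Npaper, this, h]

lemma Npaper_even (t : ℕ) (h0 : t ≠ 0) (h : t % 2 = 0) :
    Npaper t = 2 * ∏ p ∈ Finset.filter (fun p => p.Prime ∧ (p - 1) ∣ t) (Finset.range (t + 2)),
      p ^ (t.factorization p + 1) := by
  have : ¬ (t % 2 = 1) := by omega
  simp [Npaper, h0, this]

lemma Npaper_pos (t : ℕ) (h0 : t ≠ 0) : 0 < Npaper t := by
  rcases Nat.mod_two_eq_zero_or_one t with h | h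
  · rw [Npaper_even t h0 h]
    refine Nat.mul_pos (by norm_num) (Finset.prod_pos ?_)
    intro p hp
    simp only [Finset.mem_filter] at hp
    exact pow_pos hp.2.1.pos _
  · rw [Npaper_odd t h]; norm_num

lemma two_dvd_Npaper (t : ℕ) (h0 : t ≠ 0) : 2 ∣ Npaper t := by
  rcases Nat.mod_two_eq_zero_or_one t with h | h
  · rw [Npaper_even t h0 h]; exact Dvd.intro _ rfl
  · rw [Npaper_odd t h]

lemma mem_Npaper_filter {t q : ℕ} (h0 : t ≠ 0) (hq : q.Prime) (hd : (q - 1) ∣ t) :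
    q ∈ Finset.filter (fun p => p.Prime ∧ (p - 1) ∣ t) (Finset.range (t + 2)) := by
  have h1 : 1 ≤ q - 1 := by have := hq.two_le; omega
  have : q - 1 ≤ t := Nat.le_of_dvd (Nat.pos_of_ne_zero h0) hd
  simp only [Finset.mem_filter, Finset.mem_range]
  exact ⟨by omega, hq, hd⟩

/-- factorization of `Npaper t` at a prime `q`, for even positive `t`. -/
lemma Npaper_factorization (t q : ℕ) (h0 : t ≠ 0) (h : t % 2 = 0) (hq : q.Prime) :
    (Npaper t).factorization q =
      (if q = 2 then 1 else 0) + (if (q - 1) ∣ t then t.factorization q + 1 else 0) := by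
  set S := Finset.filter (fun p => p.Prime ∧ (p - 1) ∣ t) (Finset.range (t + 2)) with hS
  have hprod : (∏ p ∈ S, p ^ (t.factorization p + 1)) ≠ 0 := by
    refine Finset.prod_ne_zero_iff.mpr ?_
    intro p hp
    simp only [hS, Finset.mem_filter] at hp
    exact pow_ne_zero _ hp.2.1.ne_zero
  rw [Npaper_even t h0 h, Nat.factorization_mul (by norm_num) hprod]
  have h2 : (Nat.factorization 2) q = if q = 2 then 1 else 0 := by
    rw [Nat.Prime.factorization Nat.prime_two]
    simp [Finsupp.single_apply, eq_comm]
  have hP : (∏ p ∈ S, p ^ (t.factorization p + 1)).factorization q =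
      if (q - 1) ∣ t then t.factorization q + 1 else 0 := by
    rw [Nat.factorization_prod (fun p hp => by
      simp only [hS, Finset.mem_filter] at hp
      exact pow_ne_zero _ hp.2.1.ne_zero)]
    rw [Finsupp.finset_sum_apply]
    have : ∀ p ∈ S, ((p ^ (t.factorization p + 1)).factorization) q =
        if p = q then t.factorization p + 1 else 0 := by
      intro p hp
      simp only [hS, Finset.mem_filter] at hp
      rw [hp.2.1.factorization_pow, Finsupp.single_apply]
    rw [Finset.sum_congr rfl this, Finset.sum_ite_eq' S q (fun p => t.factorization p + 1)]
    by_cases hqS : q ∈ S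
    · simp only [hqS, if_true]
      simp only [hS, Finset.mem_filter] at hqS
      rw [if_pos hqS.2.2]
    · simp only [hqS, if_false]
      have : ¬ (q - 1) ∣ t := fun hd => hqS (mem_Npaper_filter h0 hq hd)
      rw [if_neg this]
  simp only [Finsupp.add_apply, h2, hP]

lemma min_factorization_le {q j k : ℕ} (hq : q.Prime) (hj : j ≠ 0) (hk : k ≠ 0) :
    min (j.factorization q) (k.factorization q) ≤ (j + k).factorization q := by
  set m := min (j.factorization q) (k.factorization q) with hm
  have hdj : q ^ m ∣ j := dvd_trans (pow_dvd_pow q (min_le_left _ _)) (Nat.ordProj_dvd j q)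
  have hdk : q ^ m ∣ k := dvd_trans (pow_dvd_pow q (min_le_right _ _)) (Nat.ordProj_dvd k q)
  exact (Nat.Prime.pow_dvd_iff_le_factorization hq (by omega)).mp (dvd_add hdj hdk)

/-- key arithmetic lemma: `gcd (N j) (N k) ∣ N (j+k)` for positive `j, k`. -/
lemma gcd_Npaper_dvd (j k : ℕ) (hj : j ≠ 0) (hk : k ≠ 0) :
    Nat.gcd (Npaper j) (Npaper k) ∣ Npaper (j + k) := by
  rcases Nat.mod_two_eq_zero_or_one j with hj2 | hj2 <;>
    rcases Nat.mod_two_eq_zero_or_one k with hk2 | hk2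
  · -- both even
    have hjk : (j + k) % 2 = 0 := by omega
    have hNj := Npaper_pos j hj
    have hNk := Npaper_pos k hk
    have hNjk := Npaper_pos (j + k) (by omega)
    have hgcd : Nat.gcd (Npaper j) (Npaper k) ≠ 0 := by
      simp [Nat.gcd_eq_zero_iff]; omega
    rw [← Nat.factorization_le_iff_dvd hgcd (by omega)]
    rw [Nat.factorization_gcd (by omega) (by omega)]
    intro q
    rcases em q.Prime with hq | hq
    · rw [Finsupp.inf_apply]
      rw [Npaper_factorization j q hj hj2 hq, Npaper_factorization k q hk hk2 hq,
        Npaper_factorization (j + k) q (by omega) hjk hq]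
      by_cases hdj : (q - 1) ∣ j
      · by_cases hdk : (q - 1) ∣ k
        · have hdjk : (q - 1) ∣ (j + k) := dvd_add hdj hdk
          rw [if_pos hdj, if_pos hdk, if_pos hdjk]
          have := min_factorization_le hq hj hk
          omega
        · rw [if_neg hdk]
          have : min ((if q = 2 then 1 else 0) + (if (q-1) ∣ j then j.factorization q + 1 else 0))
              ((if q = 2 then 1 else 0) + 0) ≤ (if q = 2 then 1 else 0) := by
            have := min_le_right ((if q = 2 then 1 else 0) + (if (q-1) ∣ j then j.factorization q + 1 else 0)) ((if q = 2 then 1 else 0) + 0)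
            omega
          omega
      · rw [if_neg hdj]
        have := min_le_left ((if q = 2 then 1 else 0) + 0)
          ((if q = 2 then 1 else 0) + (if (q-1) ∣ k then k.factorization q + 1 else 0))
        omega
    · simp [Nat.factorization_eq_zero_of_not_prime _ hq]
  · -- j even, k odd : j+k odd, N(j+k) = 2
    rw [Npaper_odd (j + k) (by omega), Npaper_odd k hk2]
    exact Nat.gcd_dvd_right _ _
  · rw [Npaper_odd (j + k) (by omega), Npaper_odd j hj2]
    exact Nat.gcd_dvd_left _ _
  · -- both odd
    rw [Npaper_odd j hj2, Npaper_odd k hk2]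
    simpa using two_dvd_Npaper (j + k) (by omega)

lemma gcd_smul_mul_eq_zero {R : Type*} [CommRing R] (m n : ℕ) (x y : R)
    (hx : m • x = 0) (hy : n • y = 0) : Nat.gcd m n • (x * y) = 0 := by
  have key : ((Nat.gcd m n : ℤ)) • (x * y) = 0 := by
    have hg : ((Nat.gcd m n : ℤ)) = (m : ℤ) * Int.gcdA m n + (n : ℤ) * Int.gcdB m n := by
      rw [← Int.gcd_natCast_natCast, Int.gcd_eq_gcd_ab]
    rw [hg, add_smul, mul_smul, mul_smul]
    have hx' : (m : ℤ) • (x * y) = 0 := by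
      rw [natCast_zsmul, ← smul_mul_assoc, hx, zero_mul]
    have hy' : (n : ℤ) • (x * y) = 0 := by
      rw [natCast_zsmul, mul_comm x y, ← smul_mul_assoc, hy, zero_mul]
    rw [smul_comm (m:ℤ) (Int.gcdA m n), hx', smul_comm (n:ℤ) (Int.gcdB m n), hy']
    simp
  rwa [natCast_zsmul] at key

/-- If `A ∈ R⟦X⟧` has constant coefficient `1` and `N i • coeff i A = 0` for all `i ≥ 1`,
then `A` is invertible and its inverse `B` satisfies `N i • coeff i B = 0` for all `i ≥ 1`. -/
theorem stmt_6 {R : Type*} [CommRing R] (A : PowerSeries R)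
    (hA0 : PowerSeries.constantCoeff A = 1)
    (hA : ∀ i, 1 ≤ i → Npaper i • PowerSeries.coeff i A = 0) :
    IsUnit A ∧ ∀ B : PowerSeries R, A * B = 1 →
      ∀ i, 1 ≤ i → Npaper i • PowerSeries.coeff i B = 0 := by
  constructor
  · rw [PowerSeries.isUnit_iff_constantCoeff, hA0]
    exact isUnit_one
  · intro B hB
    intro i hi
    induction i using Nat.strong_induction_on with
    | _ i ih =>
    -- coeff i (A * B) = 0
    have hcoeff : (PowerSeries.coeff i) (A * B) = 0 := by
      rw [hB, PowerSeries.coeff_one, if_neg (by omega)]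
    rw [PowerSeries.coeff_mul] at hcoeff
    have hmem : ((0 : ℕ), i) ∈ Finset.HasAntidiagonal.antidiagonal i := by
      simp [Finset.mem_antidiagonal]
    rw [← Finset.add_sum_erase _ _ hmem] at hcoeff
    simp only [PowerSeries.coeff_zero_eq_constantCoeff, hA0, one_mul] at hcoeff
    have hBi : PowerSeries.coeff i B =
        - ∑ p ∈ (Finset.HasAntidiagonal.antidiagonal i).erase (0, i),
            PowerSeries.coeff p.1 A * PowerSeries.coeff p.2 B := by
      exact eq_neg_of_add_eq_zero_left hcoeff
    rw [hBi, smul_neg, Finset.smul_sum, neg_eq_zero]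
    refine Finset.sum_eq_zero ?_
    intro p hp
    have hpmem := Finset.mem_of_mem_erase hp
    rw [Finset.HasAntidiagonal.mem_antidiagonal] at hpmem
    have hpne := Finset.ne_of_mem_erase hp
    have hp1 : 1 ≤ p.1 := by
      rcases Nat.eq_zero_or_pos p.1 with h0 | h0
    -- if p.1 = 0 then p = (0, i), contradiction
      · exfalso
        apply hpne
        have : p.2 = i := by omega
        exact Prod.ext h0 this
      · exact h0
    rcases Nat.eq_zero_or_pos p.2 with h20 | h20
    · -- p = (i, 0): use hA
      have : p.1 = i := by omega
      rw [this, ← smul_mul_assoc, hA i hi, zero_mul]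
    · -- both positive
      have hgcd : Nat.gcd (Npaper p.1) (Npaper p.2) ∣ Npaper i := by
        rw [← hpmem]
        exact gcd_Npaper_dvd p.1 p.2 (by omega) (by omega)
      obtain ⟨c, hc⟩ := hgcd
      have hz : Nat.gcd (Npaper p.1) (Npaper p.2) •
          (PowerSeries.coeff p.1 A * PowerSeries.coeff p.2 B) = 0 :=
        gcd_smul_mul_eq_zero _ _ _ _ (hA p.1 hp1) (ih p.2 (by omega) h20)
      rw [hc, mul_comm, mul_smul, hz, smul_zero]
end

section
/- Let G be a group, let V be a finite-dimensional vector space over ℂ, and let ρ : G → GL(V) be a linear representation. Let g ∈ G and let n ≥ 1 with g^n = 1, and let k be a natural number coprime to n. Let f : ℂ → ℂ be any ring homomorphism such that f(z) = z^k for every z ∈ ℂ with z^n = 1. Then f(trace ρ(g)) = trace ρ(g^k). -/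
open Module LinearMap

lemma stmt_8_aux {V : Type*} [AddCommGroup V] [Module ℂ V]
    (T : Module.End ℂ V) (μ : ℂ) (k : ℕ) {x : V} (hx : x ∈ T.eigenspace μ) :
    (T ^ k) x = μ ^ k • x := by
  induction k with
  | zero => simp
  | succ m ih =>
    rw [pow_succ, Module.End.mul_apply, Module.End.mem_eigenspace_iff.mp hx, map_smul, ih,
      smul_smul, ← pow_succ']

/-- Galois equivariance of characters: if `g^n = 1`, `k` is coprime to `n`, and
`f : ℂ →+* ℂ` sends every `n`-th root of unity `z` to `z^k`, then
`f (Tr ρ(g)) = Tr ρ(g^k)`. -/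
theorem stmt_8 {G : Type*} [Group G]
    {V : Type*} [AddCommGroup V] [Module ℂ V] [FiniteDimensional ℂ V]
    (ρ : Representation ℂ G V) (g : G) (n : ℕ) (hn : 1 ≤ n) (hg : g ^ n = 1)
    (k : ℕ) (hk : Nat.Coprime k n)
    (f : ℂ →+* ℂ) (hf : ∀ z : ℂ, z ^ n = 1 → f z = z ^ k) :
    f (LinearMap.trace ℂ V (ρ g)) = LinearMap.trace ℂ V (ρ (g ^ k)) := by
  classical
  set T : Module.End ℂ V := ρ g with hT
  have hTn : T ^ n = 1 := by rw [hT, ← map_pow, hg, map_one]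
  -- `T` is semisimple since it satisfies the squarefree polynomial `X^n - 1`.
  have hsf : Squarefree (Polynomial.X ^ n - 1 : Polynomial ℂ) := by
    refine (Polynomial.X_pow_sub_one_separable_iff.mpr ?_).squarefree
    exact_mod_cast Nat.cast_ne_zero.mpr (by omega)
  have hss : T.IsSemisimple := by
    refine Module.End.isSemisimple_of_squarefree_aeval_eq_zero hsf ?_
    simp [hTn]
  -- eigenspaces span
  have htop : ⨆ μ : ℂ, T.eigenspace μ = ⊤ := by
    have h := Module.End.iSup_maxGenEigenspace_eq_top T
    simp_rw [hss.isFinitelySemisimple.maxGenEigenspace_eq_eigenspace] at h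
    exact h
  have hindep : iSupIndep fun μ : ℂ ↦ T.eigenspace μ := T.eigenspaces_iSupIndep
  have hds := DirectSum.isInternal_submodule_of_iSupIndep_of_iSup_eq_top hindep htop
  have h_fin : {μ : ℂ | T.eigenspace μ ≠ ⊥}.Finite :=
    WellFoundedGT.finite_ne_bot_of_iSupIndep hindep
  -- maps-to facts
  have hmt : ∀ (m : ℕ) (μ : ℂ), Set.MapsTo (T ^ m) (T.eigenspace μ) (T.eigenspace μ) := by
    intro m μ x hx
    have h1 := stmt_8_aux T μ m hx
    show (T ^ m) x ∈ T.eigenspace μ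
    rw [h1]
    exact Submodule.smul_mem _ _ hx
  have hmt1 : ∀ μ : ℂ, Set.MapsTo T (T.eigenspace μ) (T.eigenspace μ) := by
    intro μ
    simpa using hmt 1 μ
  -- each eigenvalue is an n-th root of unity
  have hroot : ∀ μ : ℂ, T.eigenspace μ ≠ ⊥ → μ ^ n = 1 := by
    intro μ hμ
    obtain ⟨x, hx, hx0⟩ := Submodule.exists_mem_ne_zero_of_ne_bot hμ
    have h1 : (T ^ n) x = μ ^ n • x := stmt_8_aux T μ n hx
    rw [hTn] at h1
    have h2 : (μ ^ n - 1) • x = 0 := by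
      rw [sub_smul, one_smul, ← h1]; simp
    rcases smul_eq_zero.mp h2 with h | h
    · exact sub_eq_zero.mp h
    · exact absurd h hx0
  -- trace of restriction to eigenspace
  have hres : ∀ (m : ℕ) (μ : ℂ),
      LinearMap.trace ℂ (T.eigenspace μ) ((T ^ m).restrict (hmt m μ)) =
        μ ^ m * (Module.finrank ℂ (T.eigenspace μ) : ℂ) := by
    intro m μ
    have : (T ^ m).restrict (hmt m μ) = (μ ^ m) • (LinearMap.id : T.eigenspace μ →ₗ[ℂ] _) := by
      ext ⟨x, hx⟩
      exact stmt_8_aux T μ m hx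
    rw [this, map_smul, LinearMap.trace_id]
    simp
  have key : ∀ m : ℕ, LinearMap.trace ℂ V (T ^ m) =
      ∑ μ ∈ h_fin.toFinset, μ ^ m * (Module.finrank ℂ (T.eigenspace μ) : ℂ) := by
    intro m
    rw [LinearMap.trace_eq_sum_trace_restrict' hds h_fin (hmt m)]
    exact Finset.sum_congr rfl fun μ _ ↦ hres m μ
  have key1 : LinearMap.trace ℂ V T =
      ∑ μ ∈ h_fin.toFinset, μ * (Module.finrank ℂ (T.eigenspace μ) : ℂ) := by
    have := key 1
    simpa using this
  have hgk : ρ (g ^ k) = T ^ k := by rw [map_pow]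
  rw [hgk, key k, key1, map_sum]
  refine Finset.sum_congr rfl fun μ hμ ↦ ?_
  rw [map_mul, map_natCast, hf μ (hroot μ (by simpa using (Set.Finite.mem_toFinset h_fin).mp hμ))]
end
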